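/- Let p ≥ 3 be a prime, α ≥ 2 an integer, and n, a integers with gcd(n,p)=1 and 1 ≤ a ≤ p^α - 1. Let S = Σ'_{b=1}^{p^α} e(n·b²·(a²-1)/p^α), where the sum is over b coprime to p and e(x) = e^{2πix}. Then: (i) if p^{α-1} ∤ (a²-1), S = 0; (ii) if p^{α-1} exactly divides a²-1, writing a = r·p^{α-1} + ε with 1 ≤ r ≤ p-1 and ε = ±1, then S = p^{α-1}·[((2εrn)/p)·G(1;p) - 1]; (iii) if p^α | a²-1, S = φ(p^α). -/

import Mathlib

open Complex Finset

noncomputable def EE (q : ℕ) (k : ℤ) : ℂ := Complex.exp (2 * (Real.pi:ℂ) * Complex.I * (k / q))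

lemma EE_congr {q : ℕ} (hq : q ≠ 0) {k l : ℤ} (h : (q:ℤ) ∣ (k - l)) : EE q k = EE q l := by
  obtain ⟨t, ht⟩ := h
  have hk : k = l + q * t := by linarith
  have hqc : (q:ℂ) ≠ 0 := Nat.cast_ne_zero.mpr hq
  rw [EE, EE, hk]
  have key : (2 * (Real.pi:ℂ) * Complex.I) * ((((l + q * t : ℤ)):ℂ) / q)
      = 2 * (Real.pi:ℂ) * Complex.I * ((l:ℂ) / q) + ((t:ℤ):ℂ) * (2 * (Real.pi:ℂ) * Complex.I) := by
    push_cast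
    field_simp
  rw [key, Complex.exp_add, Complex.exp_int_mul_two_pi_mul_I, mul_one]

lemma EE_int {q : ℕ} (hq : q ≠ 0) {k : ℤ} (h : (q:ℤ) ∣ k) : EE q k = 1 := by
  have := EE_congr hq (l := 0) (by simpa using h)
  simpa [EE] using this

lemma EE_pow {q : ℕ} (m : ℤ) (t : ℕ) : EE q (m * t) = (EE q m) ^ t := by
  rw [EE, EE, ← Complex.exp_nat_mul]
  push_cast
  ring_nf

lemma two_pi_I_ne : (2 * (Real.pi:ℂ) * Complex.I) ≠ 0 := by
  simp [Real.pi_ne_zero, Complex.I_ne_zero]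

lemma EE_sum_zero {q : ℕ} (hq : q ≠ 0) {m : ℤ} (h : ¬ (q:ℤ) ∣ m) :
    ∑ t ∈ range q, EE q (m * t) = 0 := by
  have hqc : (q:ℂ) ≠ 0 := Nat.cast_ne_zero.mpr hq
  have hne : EE q m ≠ 1 := by
    intro he
    rw [EE, Complex.exp_eq_one_iff] at he
    obtain ⟨k, hk⟩ := he
    have h1 : (m:ℂ)/q = k := by
      apply mul_left_cancel₀ two_pi_I_ne
      rw [hk]; ring
    have h2 : (m:ℂ) = k * q := by field_simp at h1; exact h1.trans (mul_comm _ _)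
    exact h ⟨k, by exact_mod_cast (by rw [h2]; ring : (m:ℂ) = (q:ℂ) * k)⟩
  have hpow : EE q m ^ q = 1 := by
    rw [← EE_pow, EE_int hq ⟨m, mul_comm m q⟩]
  calc ∑ t ∈ range q, EE q (m * t) = ∑ t ∈ range q, (EE q m) ^ t := by
        simp [EE_pow]
    _ = 0 := by
        rw [geom_sum_eq hne, hpow]; simp

lemma sum_range_mul_split {M : Type*} [AddCommMonoid M] (f : ℕ → M) (m k : ℕ) :
    ∑ b ∈ range (m * k), f b = ∑ x ∈ range m, ∑ t ∈ range k, f (x + m * t) := by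
  induction k with
  | zero => simp
  | succ k ih =>
    have h1 : m * (k+1) = m * k + m := by ring
    have hb : m * k + m - m * k = m := by omega
    calc ∑ b ∈ range (m*(k+1)), f b
        = ∑ b ∈ Ico 0 (m*k), f b + ∑ b ∈ Ico (m*k) (m*k+m), f b := by
          rw [Finset.range_eq_Ico, h1]
          exact (Finset.sum_Ico_consecutive f (Nat.zero_le _) (Nat.le_add_right _ _)).symm
      _ = ∑ b ∈ range (m*k), f b + ∑ i ∈ range m, f (m*k + i) := by
          congr 1
          · rw [Finset.range_eq_Ico]
          · rw [Finset.sum_Ico_eq_sum_range, hb]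
      _ = ∑ x ∈ range m, (∑ t ∈ range k, f (x + m*t) + f (x + m*k)) := by
          rw [ih, ← Finset.sum_add_distrib]
          refine Finset.sum_congr rfl fun x _ => ?_
          congr 2
          ring
      _ = ∑ x ∈ range m, ∑ t ∈ range (k+1), f (x + m*t) := by
          refine Finset.sum_congr rfl fun x _ => ?_
          rw [Finset.sum_range_succ]

lemma EE_scale {p : ℕ} (hp : p ≠ 0) (β γ : ℕ) (k : ℤ) :
    EE (p^(β+γ)) ((p:ℤ)^β * k) = EE (p^γ) k := by
  have h1 : ((p:ℂ))^β ≠ 0 := pow_ne_zero _ (Nat.cast_ne_zero.mpr hp)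
  have h2 : ((p:ℂ))^γ ≠ 0 := pow_ne_zero _ (Nat.cast_ne_zero.mpr hp)
  unfold EE
  congr 1
  push_cast
  rw [pow_add]
  field_simp

lemma EE_congr' {q : ℕ} (hq : q ≠ 0) {k l : ℤ} (h : (q:ℤ) ∣ (k - l)) : EE q k = EE q l :=
  EE_congr hq h

lemma EE_int' {q : ℕ} (hq : q ≠ 0) {k : ℤ} (h : (q:ℤ) ∣ k) : EE q k = 1 :=
  EE_int hq h

lemma coprime_add_pow_mul {p : ℕ} (hp : p.Prime) {γ : ℕ} (hγ : 1 ≤ γ) (x t : ℕ) :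
    Nat.Coprime (x + p^γ * t) p ↔ Nat.Coprime x p := by
  have hdvd : p ∣ p^γ * t := Dvd.dvd.mul_right (dvd_pow_self p (by omega)) t
  have key : ∀ y, Nat.Coprime y p ↔ ¬ p ∣ y := fun y => by
    rw [Nat.coprime_comm]; exact hp.coprime_iff_not_dvd
  rw [key, key]
  have hiff : p ∣ x + p^γ*t ↔ p ∣ x := by
    constructor
    · intro h
      have := Nat.dvd_sub h hdvd
      simpa using this
    · intro h; exact Nat.dvd_add h hdvd
  rw [hiff]

/-- Main reduction: collapse the sum mod `p^(β+γ)` to a sum mod `p^γ`. -/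
lemma reduceM {p : ℕ} (hp : p.Prime) {β γ : ℕ} (hγ : 1 ≤ γ) (n u : ℤ) :
    ∑ b ∈ (range (p^(β+γ))).filter (fun b => Nat.Coprime b p),
      EE (p^(β+γ)) (n * (b:ℤ)^2 * ((p:ℤ)^β * u))
    = (p:ℂ)^β * ∑ x ∈ (range (p^γ)).filter (fun b => Nat.Coprime b p),
        EE (p^γ) (n * u * (x:ℤ)^2) := by
  have hp0 : p ≠ 0 := hp.pos.ne'
  have hq0 : p^γ ≠ 0 := pow_ne_zero _ hp0
  rw [Finset.sum_filter, Finset.sum_filter]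
  have hR : range (p^(β+γ)) = range (p^γ * p^β) := by rw [pow_add, mul_comm]
  rw [hR, sum_range_mul_split]
  have hterm : ∀ x ∈ range (p^γ), ∀ t ∈ range (p^β),
      (if Nat.Coprime (x + p^γ * t) p then EE (p^(β+γ)) (n * ((x + p^γ*t : ℕ):ℤ)^2 * ((p:ℤ)^β * u)) else 0)
      = (if Nat.Coprime x p then EE (p^γ) (n * u * (x:ℤ)^2) else 0) := by
    intro x _ t _
    rw [if_congr (coprime_add_pow_mul hp hγ x t) rfl rfl]
    congr 1
    have e1 : n * ((x + p^γ*t : ℕ):ℤ)^2 * ((p:ℤ)^β * u) = (p:ℤ)^β * (n * u * ((x:ℤ) + (p:ℤ)^γ * t)^2) := by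
      push_cast; ring
    rw [e1, EE_scale hp0]
    apply EE_congr' hq0
    refine ⟨n * u * ((t:ℤ) * (2*(x:ℤ) + (p:ℤ)^γ * (t:ℤ))), by push_cast; ring⟩
  calc ∑ x ∈ range (p^γ), ∑ t ∈ range (p^β),
        (if Nat.Coprime (x + p^γ * t) p then EE (p^(β+γ)) (n * ((x + p^γ*t:ℕ):ℤ)^2 * ((p:ℤ)^β * u)) else 0)
      = ∑ x ∈ range (p^γ), ∑ t ∈ range (p^β),
        (if Nat.Coprime x p then EE (p^γ) (n * u * (x:ℤ)^2) else 0) := by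
        exact Finset.sum_congr rfl fun x hx => Finset.sum_congr rfl fun t ht => hterm x hx t ht
    _ = ∑ x ∈ range (p^γ), (p^β : ℂ) * (if Nat.Coprime x p then EE (p^γ) (n * u * (x:ℤ)^2) else 0) := by
        refine Finset.sum_congr rfl fun x _ => ?_
        rw [Finset.sum_const, Finset.card_range, nsmul_eq_mul]
        push_cast; ring
    _ = (p:ℂ)^β * ∑ x ∈ range (p^γ), (if Nat.Coprime x p then EE (p^γ) (n * u * (x:ℤ)^2) else 0) := by
        rw [← Finset.mul_sum]

lemma EE_add (q : ℕ) (k l : ℤ) : EE q (k + l) = EE q k * EE q l := by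
  rw [EE, EE, EE, ← Complex.exp_add]
  congr 1
  push_cast
  rw [add_div]
  ring

lemma EE_sum_zero' {q : ℕ} (hq : q ≠ 0) {m : ℤ} (h : ¬ (q:ℤ) ∣ m) :
    ∑ t ∈ range q, EE q (m * t) = 0 :=
  EE_sum_zero hq h

lemma not_dvd_of_coprime {p : ℕ} (hp : p.Prime) {x : ℕ} (hx : Nat.Coprime x p) :
    ¬ (p:ℤ) ∣ (x:ℤ) := by
  rw [Int.natCast_dvd_natCast]
  intro h
  rw [Nat.coprime_comm] at hx
  exact (hp.coprime_iff_not_dvd.mp hx) h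

/-- Case (i) core: for `γ ≥ 2` the restricted quadratic sum mod `p^γ` vanishes. -/
lemma caseI {p : ℕ} (hp : p.Prime) (hodd : 3 ≤ p) {γ : ℕ} (hγ : 2 ≤ γ)
    {n u : ℤ} (hn : ¬ (p:ℤ) ∣ n) (hu : ¬ (p:ℤ) ∣ u) :
    ∑ x ∈ (range (p^γ)).filter (fun b => Nat.Coprime b p), EE (p^γ) (n * u * (x:ℤ)^2) = 0 := by
  have hp0 : p ≠ 0 := hp.pos.ne'
  have hγ1 : γ - 1 + 1 = γ := by omega
  have hq0 : p^γ ≠ 0 := pow_ne_zero _ hp0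
  rw [Finset.sum_filter]
  have hR : range (p^γ) = range (p^(γ-1) * p) := by rw [← pow_succ, hγ1]
  rw [hR, sum_range_mul_split]
  have hterm : ∀ y ∈ range (p^(γ-1)), ∀ s ∈ range p,
      (if Nat.Coprime (y + p^(γ-1) * s) p then EE (p^γ) (n * u * ((y + p^(γ-1)*s : ℕ):ℤ)^2) else 0)
      = (if Nat.Coprime y p then EE (p^γ) (n * u * (y:ℤ)^2) * EE p ((2*n*u*y) * s) else 0) := by
    intro y _ s _
    rw [if_congr (coprime_add_pow_mul hp (by omega) y s) rfl rfl]
    congr 1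
    have e1 : EE (p^γ) (n * u * ((y + p^(γ-1)*s : ℕ):ℤ)^2)
        = EE (p^γ) (n * u * (y:ℤ)^2 + (p:ℤ)^(γ-1) * ((2*n*u*y) * s)) := by
      apply EE_congr' hq0
      refine ⟨n * u * (s:ℤ)^2 * (p:ℤ)^(γ-2), ?_⟩
      have hpow : (p:ℤ)^(γ-1) * (p:ℤ)^(γ-1) = (p:ℤ)^γ * (p:ℤ)^(γ-2) := by
        rw [← pow_add, ← pow_add]
        congr 1
        omega
      push_cast
      linear_combination (n*u*(s:ℤ)^2) * hpow
    rw [e1, EE_add]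
    congr 1
    have := EE_scale hp0 (γ-1) 1 ((2*n*u*y) * s)
    rw [hγ1, pow_one] at this
    exact this
  calc ∑ y ∈ range (p^(γ-1)), ∑ s ∈ range p,
        (if Nat.Coprime (y + p^(γ-1) * s) p then EE (p^γ) (n * u * ((y + p^(γ-1)*s:ℕ):ℤ)^2) else 0)
      = ∑ y ∈ range (p^(γ-1)), ∑ s ∈ range p,
        (if Nat.Coprime y p then EE (p^γ) (n * u * (y:ℤ)^2) * EE p ((2*n*u*y) * s) else 0) :=
        Finset.sum_congr rfl fun y hy => Finset.sum_congr rfl fun s hs => hterm y hy s hs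
    _ = 0 := by
        apply Finset.sum_eq_zero
        intro y _
        by_cases hcy : Nat.Coprime y p
        · rw [Finset.sum_congr rfl (fun s _ => if_pos hcy)]
          have hpI : Prime (p:ℤ) := Int.prime_iff_natAbs_prime.mpr (by simpa using hp)
          have hdvd : ¬ (p:ℤ) ∣ 2*n*u*(y:ℤ) := by
            intro hdv
            rcases hpI.dvd_mul.mp hdv with h' | hy'
            · rcases hpI.dvd_mul.mp h' with h'' | hu'
              · rcases hpI.dvd_mul.mp h'' with h2 | hn'
                · have := Int.le_of_dvd (by norm_num) h2; omega
                · exact hn hn'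
              · exact hu hu'
            · exact not_dvd_of_coprime hp hcy hy'
          rw [← Finset.mul_sum, EE_sum_zero' hp0 hdvd, mul_zero]
        · apply Finset.sum_eq_zero
          intro s _
          exact if_neg hcy

section ZModPart
variable {p : ℕ} [Fact p.Prime]

noncomputable def psi (p : ℕ) (y : ZMod p) : ℂ := EE p (y.val : ℤ)

lemma psi_int [NeZero p] (k : ℤ) : psi p ((k : ZMod p)) = EE p k := by
  apply EE_congr' (NeZero.ne p)
  rw [ZMod.val_intCast]
  exact ⟨-(k / p), by rw [Int.emod_def]; ring⟩

lemma sum_range_to_zmod [NeZero p] (g : ZMod p → ℂ) :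
    ∑ x ∈ range p, g ((x : ℕ) : ZMod p) = ∑ y : ZMod p, g y := by
  apply Finset.sum_nbij' (fun x => ((x : ℕ) : ZMod p)) (fun y => y.val)
  · intro x _; exact Finset.mem_univ _
  · intro y _; exact Finset.mem_range.mpr (ZMod.val_lt y)
  · intro x hx; exact ZMod.val_cast_of_lt (Finset.mem_range.mp hx)
  · intro y _; rw [ZMod.natCast_val, ZMod.cast_id]
  · intro x _; rfl

lemma sum_psi_zero (hodd : 3 ≤ p) : ∑ y : ZMod p, psi p y = 0 := by
  rw [← sum_range_to_zmod]
  have : ∀ x ∈ range p, psi p ((x:ℕ) : ZMod p) = EE p (1 * (x:ℕ)) := by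
    intro x _
    rw [show ((1 : ℤ) * (x:ℕ)) = ((x:ℕ) : ℤ) by ring, ← psi_int]
    norm_cast
  rw [Finset.sum_congr rfl this]
  exact EE_sum_zero' (by omega) (fun h => by have := Int.le_of_dvd one_pos h; omega)

lemma sum_psi_mul_zero (hodd : 3 ≤ p) {w : ZMod p} (hw : w ≠ 0) :
    ∑ y : ZMod p, psi p (w * y) = 0 := by
  rw [Fintype.sum_bijective (fun y => w * y) (mulLeft_bijective₀ w hw)
    (fun y => psi p (w * y)) (psi p) (fun y => rfl)]
  exact sum_psi_zero hodd
end ZModPart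

section ZModQuad
variable {p : ℕ} [Fact p.Prime]

lemma sum_psi_sq_aux (hodd : 3 ≤ p) (w : ZMod p) (hw : w ≠ 0) :
    ∑ y : ZMod p, psi p (w * y^2)
      = ∑ z : ZMod p, ((quadraticChar (ZMod p) z : ℤ) : ℂ) * psi p (w * z) := by
  have hchar2 : ringChar (ZMod p) ≠ 2 := by rw [ZMod.ringChar_zmod_n]; omega
  have step1 : ∑ y : ZMod p, psi p (w * y^2)
      = ∑ z : ZMod p, ∑ y ∈ Finset.univ.filter (fun y : ZMod p => y^2 = z), psi p (w * y^2) := by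
    exact (Finset.sum_fiberwise_of_maps_to (fun y _ => Finset.mem_univ (y^2)) _).symm
  rw [step1]
  have step2 : ∀ z : ZMod p,
      ∑ y ∈ Finset.univ.filter (fun y : ZMod p => y^2 = z), psi p (w * y^2)
      = (((quadraticChar (ZMod p) z : ℤ) : ℂ) + 1) * psi p (w * z) := by
    intro z
    have hcongr : ∀ y ∈ Finset.univ.filter (fun y : ZMod p => y^2 = z),
        psi p (w * y^2) = psi p (w * z) := by
      intro y hy
      rw [(Finset.mem_filter.mp hy).2]
    rw [Finset.sum_congr rfl hcongr, Finset.sum_const, nsmul_eq_mul]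
    congr 1
    have hcard := quadraticChar_card_sqrts hchar2 z
    rw [Set.toFinset_setOf] at hcard
    have : ((Finset.univ.filter (fun y : ZMod p => y^2 = z)).card : ℤ)
        = quadraticChar (ZMod p) z + 1 := hcard
    exact_mod_cast congrArg (Int.cast : ℤ → ℂ) this
  rw [Finset.sum_congr rfl (fun z _ => step2 z)]
  have expand : ∀ z : ZMod p, (((quadraticChar (ZMod p) z : ℤ) : ℂ) + 1) * psi p (w * z)
      = ((quadraticChar (ZMod p) z : ℤ) : ℂ) * psi p (w * z) + psi p (w * z) := fun z => by ring
  rw [Finset.sum_congr rfl (fun z _ => expand z), Finset.sum_add_distrib,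
    sum_psi_mul_zero hodd hw, add_zero]

lemma sum_psi_sq (hodd : 3 ≤ p) (w : ZMod p) (hw : w ≠ 0) :
    ∑ y : ZMod p, psi p (w * y^2)
      = ((quadraticChar (ZMod p) w : ℤ) : ℂ) * ∑ y : ZMod p, psi p (y^2) := by
  have h1 : (1 : ZMod p) ≠ 0 := one_ne_zero
  have hsq : (quadraticChar (ZMod p) w)^2 = 1 := quadraticChar_sq_one hw
  have key : ∑ z : ZMod p, ((quadraticChar (ZMod p) z : ℤ) : ℂ) * psi p (w * z)
      = ((quadraticChar (ZMod p) w : ℤ) : ℂ)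
        * ∑ z : ZMod p, ((quadraticChar (ZMod p) z : ℤ) : ℂ) * psi p z := by
    have term : ∀ z : ZMod p, ((quadraticChar (ZMod p) z : ℤ) : ℂ) * psi p (w * z)
        = ((quadraticChar (ZMod p) w : ℤ) : ℂ)
          * (((quadraticChar (ZMod p) (w * z) : ℤ) : ℂ) * psi p (w * z)) := by
      intro z
      have hz : (quadraticChar (ZMod p) z)
          = quadraticChar (ZMod p) w * quadraticChar (ZMod p) (w * z) := by
        rw [map_mul, ← mul_assoc, ← pow_two, hsq, one_mul]
      rw [hz]
      push_cast
      ring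
    rw [Finset.sum_congr rfl (fun z _ => term z), ← Finset.mul_sum]
    congr 1
    exact Fintype.sum_bijective (fun z => w * z) (mulLeft_bijective₀ w hw)
      (fun z => ((quadraticChar (ZMod p) (w * z) : ℤ) : ℂ) * psi p (w * z))
      (fun v => ((quadraticChar (ZMod p) v : ℤ) : ℂ) * psi p v) (fun z => rfl)
  have base : ∑ y : ZMod p, psi p (y^2)
      = ∑ z : ZMod p, ((quadraticChar (ZMod p) z : ℤ) : ℂ) * psi p z := by
    have := sum_psi_sq_aux hodd 1 h1
    simpa [one_mul, map_one (quadraticChar (ZMod p))] using this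
  rw [sum_psi_sq_aux hodd w hw, key, base]

end ZModQuad

section CaseII
variable {p : ℕ} [Fact p.Prime]

lemma sum_EE_quad (hodd : 3 ≤ p) (w : ℤ) (hw : ¬ (p:ℤ) ∣ w) :
    ∑ x ∈ range p, EE p (w * (x:ℤ)^2)
      = ((legendreSym p w : ℤ) : ℂ) * ∑ x ∈ range p, EE p ((x:ℤ)^2) := by
  haveI : NeZero p := ⟨by omega⟩
  have hw0 : ((w : ZMod p)) ≠ 0 := fun h => hw ((ZMod.intCast_zmod_eq_zero_iff_dvd w p).mp h)
  have conv1 : ∀ x : ℕ, EE p (w * (x:ℤ)^2) = psi p ((w : ZMod p) * ((x:ℕ) : ZMod p)^2) := by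
    intro x
    rw [show ((w : ZMod p) * ((x:ℕ) : ZMod p)^2) = (((w * (x:ℤ)^2 : ℤ)) : ZMod p) by push_cast; ring]
    rw [psi_int]
  have conv2 : ∀ x : ℕ, EE p ((x:ℤ)^2) = psi p (((x:ℕ) : ZMod p)^2) := by
    intro x
    rw [show ((((x:ℕ) : ZMod p))^2) = ((((x:ℤ)^2 : ℤ)) : ZMod p) by push_cast; ring]
    rw [psi_int]
  rw [Finset.sum_congr rfl (fun x _ => conv1 x), Finset.sum_congr rfl (fun x _ => conv2 x)]
  rw [sum_range_to_zmod (fun y => psi p ((w : ZMod p) * y^2)),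
    sum_range_to_zmod (fun y => psi p (y^2))]
  rw [sum_psi_sq hodd _ hw0]
  rfl

lemma filter_range_coprime (hodd : 3 ≤ p) :
    (range p).filter (fun b => Nat.Coprime b p) = (range p).erase 0 := by
  have hp : p.Prime := Fact.out
  ext x
  simp only [Finset.mem_filter, Finset.mem_erase, Finset.mem_range]
  constructor
  · rintro ⟨hx, hc⟩
    refine ⟨?_, hx⟩
    rintro rfl
    simp [Nat.coprime_zero_left] at hc
    omega
  · rintro ⟨h0, hx⟩
    refine ⟨hx, ?_⟩
    rw [Nat.coprime_comm]
    exact hp.coprime_iff_not_dvd.mpr (fun hd => h0 (Nat.eq_zero_of_dvd_of_lt hd hx))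

lemma caseII_core (hodd : 3 ≤ p) (w : ℤ) (hw : ¬ (p:ℤ) ∣ w) :
    ∑ x ∈ (range p).filter (fun b => Nat.Coprime b p), EE p (w * (x:ℤ)^2)
      = ((legendreSym p w : ℤ) : ℂ) * (∑ x ∈ range p, EE p ((x:ℤ)^2)) - 1 := by
  have hp : p.Prime := Fact.out
  rw [filter_range_coprime hodd,
    Finset.sum_erase_eq_sub (Finset.mem_range.mpr (by omega : 0 < p)),
    sum_EE_quad hodd w hw]
  congr 1
  rw [show (w * ((0:ℕ):ℤ)^2) = (0:ℤ) by push_cast; ring]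
  exact EE_int' (by omega) (dvd_zero _)

end CaseII

lemma filter_Icc_eq_filter_range {q P : ℕ} (hq : ¬ Nat.Coprime q P) (h0 : ¬ Nat.Coprime 0 P) :
    (Finset.Icc 1 q).filter (fun b => Nat.Coprime b P)
      = (range q).filter (fun b => Nat.Coprime b P) := by
  ext b
  simp only [Finset.mem_filter, Finset.mem_Icc, Finset.mem_range]
  constructor
  · rintro ⟨⟨h1, h2⟩, hc⟩
    exact ⟨lt_of_le_of_ne h2 (fun h => hq (h ▸ hc)), hc⟩
  · rintro ⟨h1, hc⟩
    refine ⟨⟨?_, le_of_lt h1⟩, hc⟩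
    rcases Nat.eq_zero_or_pos b with h | h
    · exact absurd (h ▸ hc) h0
    · exact h

lemma term_conv (p α : ℕ) (n : ℤ) (a : ℕ) (b : ℕ) :
    Complex.exp (2 * Real.pi * Complex.I *
        (n * (b:ℂ) ^ 2 * ((a : ℂ) ^ 2 - 1) / (p : ℂ) ^ α))
      = EE (p^α) (n * (b:ℤ)^2 * ((a:ℤ)^2 - 1)) := by
  rw [EE]
  congr 1
  push_cast
  ring

lemma sum_Icc_shift {q : ℕ} (hq : q ≠ 0) (g : ℕ → ℂ) (h : g q = g 0) :
    ∑ b ∈ Finset.Icc 1 q, g b = ∑ b ∈ range q, g b := by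
  have h1 : Finset.Icc 1 q = Finset.Ico 1 (q+1) := by
    ext x; simp [Nat.lt_succ_iff]
  rw [h1, Finset.sum_Ico_succ_top (by omega), h,
    Finset.range_eq_Ico, Finset.sum_eq_sum_Ico_succ_bot (by omega : 0 < q)]
  ring

lemma card_filter_coprime (p : ℕ) (hp : p.Prime) (α : ℕ) (hα : 1 ≤ α) :
    ((range (p^α)).filter (fun b => Nat.Coprime b p)).card = Nat.totient (p^α) := by
  rw [Nat.totient]
  congr 1
  apply Finset.filter_congr
  intro x _
  constructor
  · intro h
    exact Nat.Coprime.pow_left _ h.symm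
  · intro h
    exact (Nat.coprime_pow_left_iff (by omega) _ _).mp h |>.symm

/-- evaluation of `S = Σ'_{b=1}^{p^α} e(n b² (a²-1)/p^α)` (sum over `b`
coprime to `p`) in the three cases according to the `p`-adic valuation of `a²-1`. -/
theorem restricted_quadratic_exponential_sum (p : ℕ) [Fact p.Prime] (hp : 3 ≤ p)
    (α : ℕ) (hα : 2 ≤ α) (n : ℤ) (hn : IsCoprime n (p : ℤ))
    (a : ℕ) (ha : 1 ≤ a) (ha' : a ≤ p ^ α - 1) :
    (¬ (p : ℤ) ^ (α - 1) ∣ ((a : ℤ) ^ 2 - 1) →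
      (∑ b ∈ (Finset.Icc 1 (p ^ α)).filter (fun b => Nat.Coprime b p),
        Complex.exp (2 * Real.pi * Complex.I *
          (n * b ^ 2 * ((a : ℂ) ^ 2 - 1) / (p : ℂ) ^ α))) = 0) ∧
    ((p : ℤ) ^ (α - 1) ∣ ((a : ℤ) ^ 2 - 1) → ¬ (p : ℤ) ^ α ∣ ((a : ℤ) ^ 2 - 1) →
      ∀ r : ℕ, ∀ ε : ℤ, 1 ≤ r → r ≤ p - 1 → (ε = 1 ∨ ε = -1) →
        (a : ℤ) = r * (p : ℤ) ^ (α - 1) + ε →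
      (∑ b ∈ (Finset.Icc 1 (p ^ α)).filter (fun b => Nat.Coprime b p),
        Complex.exp (2 * Real.pi * Complex.I *
          (n * b ^ 2 * ((a : ℂ) ^ 2 - 1) / (p : ℂ) ^ α))) =
        (p : ℂ) ^ (α - 1) *
          ((legendreSym p (2 * ε * r * n) : ℂ) *
            (∑ b ∈ Finset.Icc 1 p,
              Complex.exp (2 * Real.pi * Complex.I * ((b : ℂ) ^ 2 / (p : ℂ)))) - 1)) ∧
    ((p : ℤ) ^ α ∣ ((a : ℤ) ^ 2 - 1) →
      (∑ b ∈ (Finset.Icc 1 (p ^ α)).filter (fun b => Nat.Coprime b p),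
        Complex.exp (2 * Real.pi * Complex.I *
          (n * b ^ 2 * ((a : ℂ) ^ 2 - 1) / (p : ℂ) ^ α))) =
        (Nat.totient (p ^ α) : ℂ)) := by
  have hpp : p.Prime := Fact.out
  have hp0 : p ≠ 0 := by omega
  have hq0 : p^α ≠ 0 := pow_ne_zero _ hp0
  have hnp : ¬ (p:ℤ) ∣ n := by
    intro h
    have := hn.isUnit_of_dvd' h dvd_rfl
    rw [Int.isUnit_iff] at this
    rcases this with h | h <;> omega
  have hcq : ¬ Nat.Coprime (p^α) p := by
    intro h
    have h1 : p ∣ Nat.gcd (p^α) p := Nat.dvd_gcd (dvd_pow_self p (by omega)) dvd_rfl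
    rw [h] at h1
    have := Nat.le_of_dvd one_pos h1
    omega
  have hc0 : ¬ Nat.Coprime 0 p := by
    rw [Nat.coprime_zero_left]; omega
  -- uniform rewriting of the sum
  have hsum : ∀ c : ℤ, c = (a:ℤ)^2 - 1 →
      (∑ b ∈ (Finset.Icc 1 (p ^ α)).filter (fun b => Nat.Coprime b p),
        Complex.exp (2 * Real.pi * Complex.I *
          (n * b ^ 2 * ((a : ℂ) ^ 2 - 1) / (p : ℂ) ^ α)))
      = ∑ b ∈ (range (p ^ α)).filter (fun b => Nat.Coprime b p),
          EE (p^α) (n * (b:ℤ)^2 * c) := by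
    rintro c rfl
    rw [filter_Icc_eq_filter_range hcq hc0]
    exact Finset.sum_congr rfl (fun b _ => term_conv p α n a b)
  refine ⟨?_, ?_, ?_⟩
  -- Case (i)
  · intro hdvd
    rw [hsum _ rfl]
    have hc0' : ((a:ℤ)^2 - 1) ≠ 0 := fun h => hdvd (h ▸ dvd_zero _)
    have hfin : FiniteMultiplicity (p:ℤ) ((a:ℤ)^2 - 1) :=
      Int.finiteMultiplicity_iff.mpr ⟨by simpa using (by omega : p ≠ 1), hc0'⟩
    obtain ⟨u, hc, hu⟩ := hfin.exists_eq_pow_mul_and_not_dvd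
    set β := multiplicity (p:ℤ) ((a:ℤ)^2 - 1) with hβ
    have hβlt : β < α - 1 := by
      by_contra hge
      push_neg at hge
      exact hdvd (dvd_trans (pow_dvd_pow _ hge) ⟨u, hc⟩)
    have hαeq : α = β + (α - β) := by omega
    have hγ : 2 ≤ α - β := by omega
    obtain ⟨γ, hγeq, hγ2⟩ : ∃ γ, α = β + γ ∧ 2 ≤ γ := ⟨α - β, by omega, by omega⟩
    calc ∑ b ∈ (range (p ^ α)).filter (fun b => Nat.Coprime b p),
          EE (p^α) (n * (b:ℤ)^2 * ((a:ℤ)^2 - 1))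
        = ∑ b ∈ (range (p ^ (β+γ))).filter (fun b => Nat.Coprime b p),
          EE (p^(β+γ)) (n * (b:ℤ)^2 * ((p:ℤ)^β * u)) := by
          rw [← hγeq]
          exact Finset.sum_congr rfl (fun b _ => by rw [← hc])
      _ = (p:ℂ)^β * ∑ x ∈ (range (p^γ)).filter (fun b => Nat.Coprime b p),
            EE (p^γ) (n * u * (x:ℤ)^2) := reduceM hpp (by omega) n u
      _ = 0 := by rw [caseI hpp hp hγ2 hnp hu, mul_zero]
  -- Case (ii)
  · intro hdvd1 hdvd2 r ε hr1 hr2 hε haeq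
    have hpI : Prime (p:ℤ) := Int.prime_iff_natAbs_prime.mpr (by simpa using hpp)
    have hε2 : ε^2 = 1 := by rcases hε with rfl | rfl <;> norm_num
    set u : ℤ := (r:ℤ)^2 * (p:ℤ)^(α-1) + 2*ε*r with hudef
    have hcu : (a:ℤ)^2 - 1 = (p:ℤ)^(α-1) * u := by
      rw [haeq, hudef]
      linear_combination hε2
    have hur : ¬ (p:ℤ) ∣ u := by
      intro h
      have hd1 : (p:ℤ) ∣ (r:ℤ)^2 * (p:ℤ)^(α-1) :=
        Dvd.dvd.mul_left (dvd_pow_self _ (by omega : α - 1 ≠ 0)) _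
      have h2 : (p:ℤ) ∣ 2*ε*(r:ℤ) := by
        have h3 := dvd_sub h hd1
        rw [show u - (r:ℤ)^2*(p:ℤ)^(α-1) = 2*ε*(r:ℤ) from by rw [hudef]; ring] at h3
        exact h3
      rcases hpI.dvd_mul.mp h2 with h' | hr'
      · rcases hpI.dvd_mul.mp h' with h2' | hε'
        · have := Int.le_of_dvd two_pos h2'; omega
        · have hone : (p:ℤ) ∣ 1 := by
            rcases hε with rfl | rfl
            · exact hε'
            · exact (dvd_neg.mp hε')
          have := Int.le_of_dvd one_pos hone; omega
      · have : p ∣ r := Int.natCast_dvd_natCast.mp hr'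
        have := Nat.le_of_dvd (by omega) this
        omega
    have hwu : ¬ (p:ℤ) ∣ n*u := by
      intro h
      rcases hpI.dvd_mul.mp h with h | h
      · exact hnp h
      · exact hur h
    -- Legendre symbol congruence
    have hcast : ((n*u : ℤ) : ZMod p) = ((2*ε*(r:ℤ)*n : ℤ) : ZMod p) := by
      rw [hudef]
      push_cast
      rw [ZMod.natCast_self, zero_pow (by omega : α - 1 ≠ 0)]
      ring
    have hleg : legendreSym p (n*u) = legendreSym p (2*ε*(r:ℤ)*n) := by
      unfold legendreSym
      rw [hcast]
    -- Gauss sum conversion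
    have hG : (∑ b ∈ Finset.Icc 1 p,
          Complex.exp (2 * Real.pi * Complex.I * ((b : ℂ) ^ 2 / (p : ℂ))))
        = ∑ x ∈ range p, EE p ((x:ℤ)^2) := by
      have termG : ∀ b : ℕ, Complex.exp (2 * Real.pi * Complex.I * ((b : ℂ) ^ 2 / (p : ℂ)))
          = EE p ((b:ℤ)^2) := by
        intro b
        rw [EE]
        congr 1
        push_cast
        ring
      rw [Finset.sum_congr rfl (fun b _ => termG b)]
      apply sum_Icc_shift hp0
      rw [EE_int' hp0 ⟨(p:ℤ), by push_cast; ring⟩, EE_int' hp0 (by norm_num)]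
    rw [hsum _ rfl]
    calc ∑ b ∈ (range (p ^ α)).filter (fun b => Nat.Coprime b p),
          EE (p^α) (n * (b:ℤ)^2 * ((a:ℤ)^2 - 1))
        = ∑ b ∈ (range (p ^ ((α-1)+1))).filter (fun b => Nat.Coprime b p),
          EE (p^((α-1)+1)) (n * (b:ℤ)^2 * ((p:ℤ)^(α-1) * u)) := by
          rw [show (α-1)+1 = α from by omega]
          exact Finset.sum_congr rfl (fun b _ => by rw [← hcu])
      _ = (p:ℂ)^(α-1) * ∑ x ∈ (range (p^1)).filter (fun b => Nat.Coprime b p),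
            EE (p^1) (n * u * (x:ℤ)^2) := reduceM hpp le_rfl n u
      _ = (p:ℂ)^(α-1) * (((legendreSym p (n*u) : ℤ) : ℂ) * (∑ x ∈ range p, EE p ((x:ℤ)^2)) - 1) := by
          rw [pow_one]
          congr 1
          exact caseII_core hp (n*u) hwu
      _ = (p : ℂ) ^ (α - 1) *
          ((legendreSym p (2 * ε * r * n) : ℂ) *
            (∑ b ∈ Finset.Icc 1 p,
              Complex.exp (2 * Real.pi * Complex.I * ((b : ℂ) ^ 2 / (p : ℂ)))) - 1) := by
          rw [hG, hleg]
  -- Case (iii)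
  · intro hdvd
    rw [hsum _ rfl]
    obtain ⟨d, hd⟩ := hdvd
    have hone : ∀ b ∈ (range (p ^ α)).filter (fun b => Nat.Coprime b p),
        EE (p^α) (n * (b:ℤ)^2 * ((a:ℤ)^2 - 1)) = 1 := by
      intro b _
      apply EE_int' hq0
      rw [hd]
      exact ⟨n * (b:ℤ)^2 * d, by push_cast; ring⟩
    rw [Finset.sum_congr rfl hone, Finset.sum_const, nsmul_eq_mul, mul_one,
      card_filter_coprime p hpp α (by omega)]
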